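/- Let A be a unital Banach algebra, 0 < ε < 1/20, N ≥ 1, and e ∈ A with ‖e² − e‖ < ε, ‖e‖ ≤ N, ‖1 − e‖ ≤ N. For z ∈ ℂ with |z| = √ε or |z − 1| = √ε, let y = (1/z)(1 − e) + (1/(z−1))e. Then ‖(z − e)y − 1‖ < √ε/(1 − √ε), and ‖y‖ < (N + 1)/(√ε(1 − √ε)); consequently z − e is invertible and ‖(z − e)⁻¹ − y‖ < (N + 1)/((1 − √ε)(1 − 2√ε)). -/

import Mathlib

set_option maxHeartbeats 1000000 in
/-- resolvent estimates for a quasi-idempotent on the contour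
`{|z| = √ε} ∪ {|z - 1| = √ε}`, where `y = z⁻¹ • (1 - e) + (z - 1)⁻¹ • e`. -/
theorem stmt_11 {A : Type*} [NormedRing A] [NormedAlgebra ℂ A] [CompleteSpace A]
    (e : A) (ε N : ℝ) (hε0 : 0 < ε) (hε : ε < 1 / 20) (hN : 1 ≤ N)
    (he : ‖e ^ 2 - e‖ < ε) (heN : ‖e‖ ≤ N) (heN' : ‖1 - e‖ ≤ N)
    (z : ℂ) (hz : ‖z‖ = Real.sqrt ε ∨ ‖z - 1‖ = Real.sqrt ε) :
    ‖(algebraMap ℂ A z - e) * (z⁻¹ • (1 - e) + (z - 1)⁻¹ • e) - 1‖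
        < Real.sqrt ε / (1 - Real.sqrt ε) ∧
    ‖z⁻¹ • (1 - e) + (z - 1)⁻¹ • e‖ < (N + 1) / (Real.sqrt ε * (1 - Real.sqrt ε)) ∧
    IsUnit (algebraMap ℂ A z - e) ∧
    ‖Ring.inverse (algebraMap ℂ A z - e) - (z⁻¹ • (1 - e) + (z - 1)⁻¹ • e)‖
        < (N + 1) / ((1 - Real.sqrt ε) * (1 - 2 * Real.sqrt ε)) := by
  set s := Real.sqrt ε with hsdef
  have hs0 : 0 < s := Real.sqrt_pos.mpr hε0
  have hs2 : s ^ 2 = ε := Real.sq_sqrt hε0.le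
  have hslt : s < 1 / 2 := by nlinarith
  have h1s : 0 < 1 - s := by linarith
  have h12s : 0 < 1 - 2 * s := by linarith
  -- bounds on |z| and |z-1|
  have hz' : ‖z‖ = s ∨ ‖z - 1‖ = s := by
    exact hz
  have hzb : (s ≤ ‖z‖ ∧ 1 - s ≤ ‖z - 1‖) ∨ (1 - s ≤ ‖z‖ ∧ s ≤ ‖z - 1‖) := by
    rcases hz' with h | h
    · left
      refine ⟨h.ge, ?_⟩
      calc 1 - s = ‖(1 : ℂ)‖ - ‖z‖ := by rw [norm_one, h]
        _ ≤ ‖1 - z‖ := norm_sub_norm_le 1 z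
        _ = ‖z - 1‖ := norm_sub_rev 1 z
    · right
      refine ⟨?_, h.ge⟩
      have h1 : (1 : ℝ) ≤ ‖z‖ + ‖z - 1‖ := by
        calc (1 : ℝ) = ‖z - (z - 1)‖ := by norm_num
          _ ≤ ‖z‖ + ‖z - 1‖ := norm_sub_le _ _
      linarith [h]
  have hzs : s ≤ ‖z‖ := by rcases hzb with ⟨h, _⟩ | ⟨h, _⟩ <;> linarith
  have hz1s : s ≤ ‖z - 1‖ := by rcases hzb with ⟨_, h⟩ | ⟨_, h⟩ <;> linarith
  have hprod : s * (1 - s) ≤ ‖z‖ * ‖z - 1‖ := by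
    rcases hzb with ⟨h1, h2⟩ | ⟨h1, h2⟩ <;> nlinarith
  have hz0 : z ≠ 0 := by
    intro h; rw [h, norm_zero] at hzs; linarith
  have hz1 : z - 1 ≠ 0 := by
    intro h; rw [h, norm_zero] at hz1s; linarith
  set y := z⁻¹ • (1 - e) + (z - 1)⁻¹ • e with hydef
  set a := algebraMap ℂ A z - e with hadef
  -- the key algebraic identity
  have key : a * y - 1 = (z⁻¹ * (z - 1)⁻¹) • (e - e ^ 2) := by
    rw [hadef, hydef, Algebra.algebraMap_eq_smul_one]
    simp only [mul_add, sub_mul, smul_mul_assoc, mul_smul_comm, one_mul, mul_one,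
      smul_smul, mul_sub, sub_mul, pow_two]
    match_scalars <;> field_simp <;> ring
  -- first estimate
  have hzprod0 : (0 : ℝ) < ‖z‖ * ‖z - 1‖ := lt_of_lt_of_le (by positivity) hprod
  have hkey : ‖a * y - 1‖ < s / (1 - s) := by
    rw [key, norm_smul]
    have h1 : ‖z⁻¹ * (z - 1)⁻¹‖ = (‖z‖ * ‖z - 1‖)⁻¹ := by
      rw [norm_mul, norm_inv, norm_inv, mul_inv]
    rw [h1]
    have h2 : ‖e - e ^ 2‖ < ε := by rwa [norm_sub_rev]
    calc (‖z‖ * ‖z - 1‖)⁻¹ * ‖e - e ^ 2‖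
        ≤ (s * (1 - s))⁻¹ * ‖e - e ^ 2‖ := by gcongr
      _ < (s * (1 - s))⁻¹ * ε := by
          apply mul_lt_mul_of_pos_left h2 (by positivity)
      _ = s / (1 - s) := by rw [← hs2]; field_simp
  -- second estimate
  have hyN : ‖y‖ ≤ N / (s * (1 - s)) := by
    have hN0 : (0 : ℝ) ≤ N := by linarith
    have hstep : ‖y‖ ≤ ‖z‖⁻¹ * ‖1 - e‖ + ‖z - 1‖⁻¹ * ‖e‖ := by
      calc ‖y‖ ≤ ‖z⁻¹ • (1 - e)‖ + ‖(z - 1)⁻¹ • e‖ := norm_add_le _ _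
        _ = ‖z‖⁻¹ * ‖1 - e‖ + ‖z - 1‖⁻¹ * ‖e‖ := by
            rw [norm_smul, norm_smul, norm_inv, norm_inv]
    rcases hzb with ⟨h1, h2⟩ | ⟨h1, h2⟩
    · calc ‖y‖ ≤ ‖z‖⁻¹ * ‖1 - e‖ + ‖z - 1‖⁻¹ * ‖e‖ := hstep
        _ ≤ s⁻¹ * N + (1 - s)⁻¹ * N := by gcongr
        _ = N / (s * (1 - s)) := by field_simp; ring
    · calc ‖y‖ ≤ ‖z‖⁻¹ * ‖1 - e‖ + ‖z - 1‖⁻¹ * ‖e‖ := hstep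
        _ ≤ (1 - s)⁻¹ * N + s⁻¹ * N := by gcongr
        _ = N / (s * (1 - s)) := by field_simp; ring
  have hylt : ‖y‖ < (N + 1) / (s * (1 - s)) := by
    refine lt_of_le_of_lt hyN ?_
    rw [div_lt_div_iff₀ (by positivity) (by positivity)]
    nlinarith [mul_pos hs0 h1s]
  -- the unit part
  set t : A := 1 - a * y with htdef
  have htT : ‖t‖ < s / (1 - s) := by
    have : t = -(a * y - 1) := by rw [htdef, neg_sub]
    rw [this, norm_neg]; exact hkey
  have hT1 : s / (1 - s) < 1 := (div_lt_one h1s).mpr (by linarith)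
  have htn : ‖t‖ < 1 := htT.trans hT1
  have huval : (1 : A) - t = a * y := sub_sub_cancel 1 (a * y)
  have hu : IsUnit (a * y) := huval ▸ isUnit_one_sub_of_norm_lt_one htn
  have hcomm : Commute a y := by
    have hae : Commute a e :=
      Commute.sub_left (Algebra.commutes z e) (Commute.refl e)
    have ha1 : Commute a (1 : A) := Commute.one_right _
    exact ((ha1.sub_right hae).smul_right _).add_right (hae.smul_right _)
  have hunit : IsUnit a := (hcomm.isUnit_mul_iff.mp hu).1
  -- the inverse formula
  have hinv : Ring.inverse a = y * Ring.inverse (a * y) := by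
    have h1 : a * (y * Ring.inverse (a * y)) = 1 := by
      rw [← mul_assoc]; exact Ring.mul_inverse_cancel _ hu
    calc Ring.inverse a = Ring.inverse a * (a * (y * Ring.inverse (a * y))) := by
          rw [h1, mul_one]
      _ = y * Ring.inverse (a * y) := Ring.inverse_mul_cancel_left _ _ hunit
  have ht0 : (0 : ℝ) ≤ ‖t‖ := norm_nonneg _
  have hT0 : (0 : ℝ) < 1 - ‖t‖ := by linarith
  have hsum : Summable (fun n : ℕ => ‖t‖ ^ n) := summable_geometric_of_lt_one ht0 htn
  have hsumA : Summable (fun n : ℕ => t ^ n) := summable_geometric_of_norm_lt_one htn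
  have hsumN : Summable (fun n : ℕ => ‖t ^ n * t‖) := by
    refine Summable.of_nonneg_of_le (fun n => norm_nonneg _) (fun n => ?_) (hsum.mul_right ‖t‖)
    rw [← pow_succ]
    calc ‖t ^ (n + 1)‖ ≤ ‖t‖ ^ (n + 1) := norm_pow_le' t n.succ_pos
      _ = ‖t‖ ^ n * ‖t‖ := by rw [pow_succ]
  have hwt : ‖Ring.inverse ((1 : A) - t) * t‖ ≤ ‖t‖ / (1 - ‖t‖) := by
    rw [← geom_series_eq_inverse t htn, ← hsumA.tsum_mul_right]
    calc ‖∑' n : ℕ, t ^ n * t‖ ≤ ∑' n : ℕ, ‖t ^ n * t‖ := norm_tsum_le_tsum_norm hsumN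
      _ ≤ ∑' n : ℕ, ‖t‖ ^ n * ‖t‖ := by
          refine Summable.tsum_le_tsum (fun n => ?_) hsumN (hsum.mul_right ‖t‖)
          rw [← pow_succ]
          calc ‖t ^ (n + 1)‖ ≤ ‖t‖ ^ (n + 1) := norm_pow_le' t n.succ_pos
            _ = ‖t‖ ^ n * ‖t‖ := by rw [pow_succ]
      _ = (∑' n : ℕ, ‖t‖ ^ n) * ‖t‖ := hsum.tsum_mul_right ‖t‖
      _ = (1 - ‖t‖)⁻¹ * ‖t‖ := by rw [tsum_geometric_of_lt_one ht0 htn]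
      _ = ‖t‖ / (1 - ‖t‖) := by rw [div_eq_mul_inv, mul_comm]
  have hvt : Ring.inverse ((1 : A) - t) - 1 = Ring.inverse ((1 : A) - t) * t := by
    have h := Ring.inverse_mul_cancel ((1 : A) - t) (isUnit_one_sub_of_norm_lt_one htn)
    calc Ring.inverse ((1 : A) - t) - 1
        = Ring.inverse ((1 : A) - t) - Ring.inverse ((1 : A) - t) * (1 - t) := by rw [h]
      _ = Ring.inverse ((1 : A) - t) * t := by noncomm_ring
  have hdiff : Ring.inverse a - y = y * (Ring.inverse ((1 : A) - t) * t) := by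
    rw [hinv, ← huval, ← hvt]; noncomm_ring
  have hfinal : ‖Ring.inverse a - y‖ ≤ ‖y‖ * (‖t‖ / (1 - ‖t‖)) := by
    rw [hdiff]
    calc ‖y * (Ring.inverse ((1 : A) - t) * t)‖
        ≤ ‖y‖ * ‖Ring.inverse ((1 : A) - t) * t‖ := norm_mul_le _ _
      _ ≤ ‖y‖ * (‖t‖ / (1 - ‖t‖)) := by gcongr
  have hfac : ‖t‖ / (1 - ‖t‖) ≤ s / (1 - 2 * s) := by
    rw [div_le_div_iff₀ hT0 h12s]
    nlinarith [(lt_div_iff₀ h1s).mp htT]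
  have hlast : ‖Ring.inverse a - y‖ < (N + 1) / ((1 - s) * (1 - 2 * s)) := by
    calc ‖Ring.inverse a - y‖ ≤ ‖y‖ * (‖t‖ / (1 - ‖t‖)) := hfinal
      _ ≤ (N / (s * (1 - s))) * (s / (1 - 2 * s)) := by
          apply mul_le_mul hyN hfac (by positivity) (by positivity)
      _ = N / ((1 - s) * (1 - 2 * s)) := by
          rw [div_mul_div_comm, mul_comm N s, mul_assoc, mul_div_mul_left _ _ (ne_of_gt hs0)]
      _ < (N + 1) / ((1 - s) * (1 - 2 * s)) := by
          rw [div_lt_div_iff₀ (by positivity) (by positivity)]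
          nlinarith [mul_pos h1s h12s]
  exact ⟨hkey, hylt, hunit, hlast⟩
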